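/- arXiv:2109.12729 — 12 statements merged into one kernel-verified Lean document; each statement's English description precedes it below -/
import Mathlib

section
/- In any group formation game where all members of a group share the same group utility, if a subset S of a group G_k deviates to join group G_{k'} such that the utility of G_{k'} ∪ S strictly exceeds the utility of G_k, and the utility of G_{k'} ∪ S is at least the utility of G_{k'}, then the resulting state is strictly higher in the lexicographic order of sorted agent-utility vectors (utilities sorted in non-increasing order). -/
/-- `P` is a partition of the agents `Fin n` into (nonempty) groups. -/
def IsGroupPartition {n : ℕ} (P : Finset (Finset (Fin n))) : Prop :=
  (∀ G ∈ P, G.Nonempty) ∧ ∀ i : Fin n, ∃! G, G ∈ P ∧ i ∈ G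

/-- The vector (list) of agents' utilities, sorted in non-increasing order;
each agent's utility equals the utility of her group. -/
noncomputable def Psi {n : ℕ} (U : Finset (Fin n) → ℝ)
    (P : Finset (Finset (Fin n))) : List ℝ :=
  ((P.val.bind fun G => Multiset.replicate G.card (U G)).sort (· ≤ ·)).reverse


lemma count_zero_of_forall_lt {y : ℝ} {T : List ℝ} (hs : (y :: T).Pairwise (· ≥ ·))
    {x : ℝ} (hx : y < x) : (y :: T).count x = 0 := by
  rw [List.count_eq_zero]
  intro hmem
  rcases List.mem_cons.mp hmem with h | h
  · exact absurd hx (by simp [h])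
  · exact absurd ((List.pairwise_cons.mp hs).1 x h) (not_le.mpr hx)

lemma lex_of_counts : ∀ (L' L : List ℝ), L.Pairwise (· ≥ ·) → L'.Pairwise (· ≥ ·) →
    L.length = L'.length → ∀ v : ℝ, L.count v < L'.count v →
    (∀ x, v < x → L.count x ≤ L'.count x) → List.Lex (· < ·) L L'
  | [], L, _, _, hlen, v, hv, _ => by simp at hv
  | y :: T', [], _, _, hlen, v, hv, _ => by simp at hlen
  | y :: T', x :: T, hL, hL', hlen, v, hv, habove => by
    rcases lt_trichotomy x y with h | h | h
    · exact List.Lex.rel h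
    · subst h
      refine List.Lex.cons ?_
      refine lex_of_counts T' T hL.of_cons hL'.of_cons (by simpa using hlen) v ?_ ?_
      · have := hv
        simp only [List.count_cons] at this
        split at this <;> omega
      · intro z hz
        have := habove z hz
        simp only [List.count_cons] at this
        split at this <;> omega
    · exfalso
      have hxle : x ≤ v := by
        by_contra hc
        have h1 : (y :: T').count x = 0 := count_zero_of_forall_lt hL' h
        have h2 : 1 ≤ (x :: T).count x := by simp [List.count_cons]
        have := habove x (not_le.mp hc)
        omega
      have h3 : (y :: T').count v = 0 :=
        count_zero_of_forall_lt hL' (lt_of_lt_of_le h hxle)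
      omega

lemma psi_sorted {n : ℕ} (U : Finset (Fin n) → ℝ) (P : Finset (Finset (Fin n))) :
    (Psi U P).Pairwise (· ≥ ·) := by
  have h := Multiset.pairwise_sort (r := (· ≤ ·))
    (s := P.val.bind fun G => Multiset.replicate G.card (U G))
  exact List.pairwise_reverse.mpr h

lemma psi_count {n : ℕ} (U : Finset (Fin n) → ℝ) (P : Finset (Finset (Fin n))) (x : ℝ) :
    (Psi U P).count x
      = Multiset.count x (P.val.bind fun G => Multiset.replicate G.card (U G)) := by
  rw [Psi, List.count_reverse, ← Multiset.coe_count, Multiset.sort_eq]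

lemma psi_length {n : ℕ} (U : Finset (Fin n) → ℝ) (P : Finset (Finset (Fin n))) :
    (Psi U P).length
      = Multiset.card (P.val.bind fun G => Multiset.replicate G.card (U G)) := by
  rw [Psi, List.length_reverse, Multiset.length_sort]

lemma count_bind_eq {n : ℕ} (U : Finset (Fin n) → ℝ) (P : Finset (Finset (Fin n))) (x : ℝ) :
    Multiset.count x (P.val.bind fun G => Multiset.replicate G.card (U G))
      = ∑ G ∈ P, (if U G = x then G.card else 0) := by
  rw [Multiset.count_bind]
  simp only [Multiset.count_replicate]
  rfl

lemma card_bind_eq {n : ℕ} (U : Finset (Fin n) → ℝ) (P : Finset (Finset (Fin n))) :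
    Multiset.card (P.val.bind fun G => Multiset.replicate G.card (U G))
      = ∑ G ∈ P, G.card := by
  rw [Multiset.card_bind]
  simp only [Function.comp, Multiset.card_replicate]
  rfl

/-- If a subset `S` of group `Gk` deviates to join group `Gk'` (possibly the empty
group, i.e. forming a new group), strictly improving over `U Gk` while not hurting
`Gk'`, then the resulting state is strictly higher in the lexicographic order of the
sorted agent-utility vectors. -/
theorem stmt0 {n : ℕ} (U : Finset (Fin n) → ℝ)
    (P : Finset (Finset (Fin n))) (hP : IsGroupPartition P)
    (Gk Gk' S : Finset (Fin n))
    (hGk : Gk ∈ P) (hGk' : Gk' = ∅ ∨ (Gk' ∈ P ∧ Gk' ≠ Gk))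
    (hS : S ⊆ Gk) (hSne : S.Nonempty)
    (himp : U (Gk' ∪ S) > U Gk)
    (hacc : Gk' ≠ ∅ → U (Gk' ∪ S) ≥ U Gk')
    (P' : Finset (Finset (Fin n)))
    (hP' : P' = (((P.erase Gk).erase Gk') ∪ {Gk \ S, Gk' ∪ S}).erase ∅) :
    List.Lex (· < ·) (Psi U P) (Psi U P') := by
  classical
  obtain ⟨hne, huniq⟩ := hP
  have hnotin : (∅ : Finset (Fin n)) ∉ P := fun h => by simpa using hne ∅ h
  have hdisj : ∀ G ∈ P, ∀ G' ∈ P, G ≠ G' → Disjoint G G' := by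
    intro G hG G' hG' hne'
    rw [Finset.disjoint_left]
    intro i hiG hiG'
    obtain ⟨H, -, hH⟩ := huniq i
    exact hne' ((hH G ⟨hG, hiG⟩).trans (hH G' ⟨hG', hiG'⟩).symm)
  obtain ⟨i0, hi0⟩ := hSne
  set A := Gk \ S with hA
  set C := Gk' ∪ S with hCdef
  set Q := (P.erase Gk).erase Gk' with hQdef
  have hSGk' : Disjoint Gk' S := by
    rcases hGk' with h1 | ⟨h1, h2⟩
    · simp [h1]
    · exact (hdisj Gk' h1 Gk hGk h2).mono_right hS
  have hCcard : C.card = Gk'.card + S.card := Finset.card_union_of_disjoint hSGk'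
  have hAcard : A.card = Gk.card - S.card := Finset.card_sdiff_of_subset hS
  have hScard : S.card ≤ Gk.card := Finset.card_le_card hS
  have hCQ : C ∉ Q := by
    intro hc
    have hc1 : C ∈ P.erase Gk := Finset.mem_of_mem_erase hc
    have hc2 : C ≠ Gk := (Finset.mem_erase.mp hc1).1
    have hc3 : C ∈ P := Finset.mem_of_mem_erase hc1
    have := hdisj C hc3 Gk hGk hc2
    exact (Finset.disjoint_left.mp this (Finset.mem_union_right _ hi0)) (hS hi0)
  have hAQ : A ∉ Q := by
    intro hc
    have hc1 : A ∈ P.erase Gk := Finset.mem_of_mem_erase hc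
    have hc2 : A ≠ Gk := (Finset.mem_erase.mp hc1).1
    have hc3 : A ∈ P := Finset.mem_of_mem_erase hc1
    obtain ⟨j, hj⟩ := hne A hc3
    exact (Finset.disjoint_left.mp (hdisj A hc3 Gk hGk hc2) hj) (Finset.mem_sdiff.mp hj).1
  have hAC : A ≠ C := by
    intro hc
    have : i0 ∈ A := hc ▸ Finset.mem_union_right _ hi0
    exact (Finset.mem_sdiff.mp this).2 hi0
  have hQpair : Disjoint Q ({A, C} : Finset (Finset (Fin n))) := by
    rw [Finset.disjoint_right]
    intro x hx
    rcases Finset.mem_insert.mp hx with h | h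
    · exact h ▸ hAQ
    · exact (Finset.mem_singleton.mp h) ▸ hCQ
  have key : ∀ h : Finset (Fin n) → ℕ, h ∅ = 0 →
      ∑ G ∈ P', h G + (h Gk + h Gk') = ∑ G ∈ P, h G + (h A + h C) := by
    intro h h0
    rw [hP', Finset.sum_erase _ h0, Finset.sum_union hQpair, Finset.sum_pair hAC]
    have hQsum : ∑ G ∈ Q, h G + (h Gk + h Gk') = ∑ G ∈ P, h G := by
      rcases hGk' with h1 | ⟨h1, h2⟩
      · have hQ2 : Q = P.erase Gk := by
          rw [hQdef, h1]
          exact Finset.erase_eq_of_notMem fun hc => hnotin (Finset.mem_of_mem_erase hc)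
        have e2 := Finset.sum_erase_add P h hGk
        rw [hQ2, h1, h0]
        omega
      · have hGk'mem : Gk' ∈ P.erase Gk := Finset.mem_erase.mpr ⟨h2, h1⟩
        have e1 := Finset.sum_erase_add (P.erase Gk) h hGk'mem
        have e2 := Finset.sum_erase_add P h hGk
        rw [← hQdef] at e1
        omega
    omega
  have hc_ne_a : U Gk ≠ U C := ne_of_lt himp
  have hb_le_c : Gk' ≠ ∅ → U Gk' ≤ U C := hacc
  -- apply the lex lemma with v = U C
  refine lex_of_counts (Psi U P') (Psi U P) (psi_sorted U P) (psi_sorted U P')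
    ?_ (U C) ?_ ?_
  · rw [psi_length, psi_length, card_bind_eq, card_bind_eq]
    have := key (fun G => G.card) rfl
    omega
  · rw [psi_count, psi_count, count_bind_eq, count_bind_eq]
    have hk := key (fun G => if U G = U C then G.card else 0) (by simp)
    simp only at hk
    have e1 : (if U Gk = U C then Gk.card else 0) = 0 := by simp [hc_ne_a]
    have e3 : (if U Gk' = U C then Gk'.card else 0) ≤ Gk'.card := by split <;> omega
    rw [e1] at hk
    simp only [if_true] at hk
    have hS1 : 1 ≤ S.card := Finset.card_pos.mpr ⟨i0, hi0⟩
    omega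
  · intro x hx
    rw [psi_count, psi_count, count_bind_eq, count_bind_eq]
    have hk := key (fun G => if U G = x then G.card else 0) (by simp)
    have e1 : (if U Gk = x then Gk.card else 0) = 0 := by
      simp [ne_of_lt (lt_trans himp hx)]
    have e2 : (if U C = x then C.card else 0) = 0 := by simp [ne_of_lt hx]
    have e3 : (if U Gk' = x then Gk'.card else 0) = 0 := by
      by_cases hGke : Gk' = ∅
      · simp [hGke]
      · simp [ne_of_lt (lt_of_le_of_lt (hb_le_c hGke) hx)]
    rw [e1, e2, e3] at hk
    omega
end

section
/- Every finite group formation game with shared utilities admits a Strong Acceptance Equilibrium: there exists a partition of the agents into groups such that for every group G, every subset S ⊆ G, and every other group G' (including the empty group), either U_G ≥ U_{G'∪S} or U_{G'} > U_{G'∪S}. -/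
theorem key_greedy {n : ℕ} (U : Finset (Fin n) → ℝ) (R : Finset (Fin n)) :
    ∃ P : Finset (Finset (Fin n)),
      (∀ G ∈ P, G ⊆ R) ∧ (∀ G ∈ P, G.Nonempty) ∧
      (∀ i ∈ R, ∃! G, G ∈ P ∧ i ∈ G) ∧
      ∀ G ∈ P, ∀ S ⊆ G, S.Nonempty →
        U G ≥ U S ∧ ∀ G' ∈ P, G' ≠ G → (U G ≥ U (G' ∪ S) ∨ U G' > U (G' ∪ S)) := by
  induction R using Finset.strongInduction with
  | _ R ih =>
    rcases R.eq_empty_or_nonempty with rfl | hR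
    · exact ⟨∅, by simp, by simp, by simp, by simp⟩
    · set 𝒮 := R.powerset.filter (fun S => S.Nonempty) with h𝒮
      have h𝒮mem : ∀ T : Finset (Fin n), T ∈ 𝒮 ↔ T ⊆ R ∧ T.Nonempty := by
        intro T; simp [h𝒮]
      have h𝒮ne : 𝒮.Nonempty := ⟨R, (h𝒮mem R).2 ⟨le_refl _, hR⟩⟩
      obtain ⟨m, hm𝒮, hm⟩ := 𝒮.exists_max_image U h𝒮ne
      set M := 𝒮.filter (fun S => ∀ T ∈ 𝒮, U T ≤ U S) with hM
      have hMne : M.Nonempty := ⟨m, by simp only [hM, Finset.mem_filter]; exact ⟨hm𝒮, hm⟩⟩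
      obtain ⟨G0, hG0M, hG0card⟩ := M.exists_max_image (fun S => S.card) hMne
      have hG0𝒮 : G0 ∈ 𝒮 := (Finset.mem_filter.mp hG0M).1
      have hG0max : ∀ T ∈ 𝒮, U T ≤ U G0 := (Finset.mem_filter.mp hG0M).2
      obtain ⟨hG0R, hG0ne⟩ := (h𝒮mem G0).mp hG0𝒮
      set R' := R \ G0 with hR'
      have hss : R' ⊂ R := by
        obtain ⟨x, hx⟩ := hG0ne
        refine Finset.ssubset_iff_of_subset (Finset.sdiff_subset) |>.mpr ⟨x, hG0R hx, by simp [hR', hx]⟩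
      obtain ⟨P', hP'R, hP'ne, hP'cov, hP'prop⟩ := ih R' hss
      -- key strict inequality
      have hstrict : ∀ S : Finset (Fin n), S ⊆ R' → S.Nonempty → U G0 > U (G0 ∪ S) := by
        intro S hSR' hSne
        have hsub : G0 ∪ S ⊆ R := Finset.union_subset hG0R (hSR'.trans Finset.sdiff_subset)
        have hmem : G0 ∪ S ∈ 𝒮 := (h𝒮mem _).2 ⟨hsub, hG0ne.mono Finset.subset_union_left⟩
        have hle : U (G0 ∪ S) ≤ U G0 := hG0max _ hmem
        rcases lt_or_eq_of_le hle with h | h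
        · exact h
        · exfalso
          have hMmem : G0 ∪ S ∈ M := by
            rw [hM, Finset.mem_filter]
            exact ⟨hmem, fun T hT => (hG0max T hT).trans h.ge⟩
          have hcard := hG0card _ hMmem
          obtain ⟨x, hx⟩ := hSne
          have hxnG0 : x ∉ G0 := (Finset.mem_sdiff.mp (hSR' hx)).2
          have : G0 ⊂ G0 ∪ S :=
            Finset.ssubset_iff_of_subset Finset.subset_union_left |>.mpr
              ⟨x, Finset.mem_union_right _ hx, hxnG0⟩
          exact absurd hcard (not_le.mpr (Finset.card_lt_card this))
      refine ⟨insert G0 P', ?_, ?_, ?_, ?_⟩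
      · intro G hG
        rcases Finset.mem_insert.mp hG with rfl | hG
        · exact hG0R
        · exact (hP'R G hG).trans Finset.sdiff_subset
      · intro G hG
        rcases Finset.mem_insert.mp hG with rfl | hG
        · exact hG0ne
        · exact hP'ne G hG
      · intro i hi
        by_cases hiG0 : i ∈ G0
        · refine ⟨G0, ⟨Finset.mem_insert_self _ _, hiG0⟩, ?_⟩
          rintro G ⟨hG, hiG⟩
          rcases Finset.mem_insert.mp hG with rfl | hG
          · rfl
          · exact absurd ((hP'R G hG) hiG) (by simp [hR', hiG0])
        · have hiR' : i ∈ R' := Finset.mem_sdiff.mpr ⟨hi, hiG0⟩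
          obtain ⟨G1, ⟨hG1P, hiG1⟩, huniq⟩ := hP'cov i hiR'
          refine ⟨G1, ⟨Finset.mem_insert_of_mem hG1P, hiG1⟩, ?_⟩
          rintro G ⟨hG, hiG⟩
          rcases Finset.mem_insert.mp hG with rfl | hG
          · exact absurd hiG hiG0
          · exact huniq G ⟨hG, hiG⟩
      · intro G hG S hSG hSne
        rcases Finset.mem_insert.mp hG with rfl | hG
        · constructor
          · exact hG0max S ((h𝒮mem S).2 ⟨hSG.trans hG0R, hSne⟩)
          · intro G' hG' hne
            rcases Finset.mem_insert.mp hG' with rfl | hG'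
            · exact absurd rfl hne
            · left
              refine hG0max _ ((h𝒮mem _).2 ⟨?_, hSne.mono Finset.subset_union_right⟩)
              exact Finset.union_subset ((hP'R G' hG').trans Finset.sdiff_subset)
                (hSG.trans hG0R)
        · obtain ⟨h1, h2⟩ := hP'prop G hG S hSG hSne
          have hGP' := hG
          refine ⟨h1, ?_⟩
          intro G' hG' hne
          rcases Finset.mem_insert.mp hG' with rfl | hG'
          · right
            exact hstrict S (hSG.trans (hP'R G hGP')) hSne
          · exact h2 G' hG' hne

/-- Every finite group formation game with shared utilities admits a Strong
Acceptance Equilibrium: a partition of the agents into (nonempty) groups such that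
for every group `G`, every nonempty subset `S ⊆ G`, and every other group `G'`
(including the empty group, whose utility is `-∞`, which yields the condition
`U G ≥ U S`), either `U G ≥ U (G' ∪ S)` or `U G' > U (G' ∪ S)`. -/
theorem stmt1 {n : ℕ} (U : Finset (Fin n) → ℝ) :
    ∃ P : Finset (Finset (Fin n)),
      ((∀ G ∈ P, G.Nonempty) ∧ ∀ i : Fin n, ∃! G, G ∈ P ∧ i ∈ G) ∧
      ∀ G ∈ P, ∀ S ⊆ G, S.Nonempty →
        U G ≥ U S ∧
        ∀ G' ∈ P, G' ≠ G → (U G ≥ U (G' ∪ S) ∨ U G' > U (G' ∪ S)) := by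
  obtain ⟨P, _, hne, hcov, hprop⟩ := key_greedy U Finset.univ
  exact ⟨P, ⟨hne, fun i => hcov i (Finset.mem_univ i)⟩, hprop⟩
end

section
/- Any sequence of improving deviations—where an improving deviation moves a subset S of a group to another group G' with U_{G'∪S} > U_{G_{σ_S}} and U_{G'∪S} ≥ U_{G'}—terminates in finitely many steps, and the terminal partition is a Strong Acceptance Equilibrium. -/
/-- An improving deviation: a nonempty subset `S` of an existing group `Gk` moves
jointly to another (possibly empty) group `Gk'`, where the deviating agents strictly
benefit (`U (Gk' ∪ S) > U Gk`) and the receiving group weakly benefits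
(`U (Gk' ∪ S) ≥ U Gk'`; vacuous for the empty group, whose utility is `-∞`). -/
def ImprovingStep {n : ℕ} (U : Finset (Fin n) → ℝ)
    (P P' : Finset (Finset (Fin n))) : Prop :=
  ∃ Gk ∈ P, ∃ S ⊆ Gk, S.Nonempty ∧
    ∃ Gk' : Finset (Fin n), (Gk' = ∅ ∨ (Gk' ∈ P ∧ Gk' ≠ Gk)) ∧
      U (Gk' ∪ S) > U Gk ∧ (Gk' ≠ ∅ → U (Gk' ∪ S) ≥ U Gk') ∧
      P' = (((P.erase Gk).erase Gk') ∪ {Gk \ S, Gk' ∪ S}).erase ∅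

namespace Stmt3Aux

variable {n : ℕ}

/-- Rank of a group according to its utility. -/
noncomputable def rk (U : Finset (Fin n) → ℝ) (G : Finset (Fin n)) : ℕ :=
  (Finset.univ.filter (fun H : Finset (Fin n) => U H < U G)).card

lemma rk_le {U : Finset (Fin n) → ℝ} {G H : Finset (Fin n)} (h : U G ≤ U H) :
    rk U G ≤ rk U H := by
  apply Finset.card_le_card
  intro x hx
  simp only [Finset.mem_filter, Finset.mem_univ, true_and] at hx ⊢
  exact lt_of_lt_of_le hx h

lemma rk_lt {U : Finset (Fin n) → ℝ} {G H : Finset (Fin n)} (h : U G < U H) :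
    rk U G < rk U H := by
  apply Finset.card_lt_card
  constructor
  · intro x hx
    simp only [Finset.mem_filter, Finset.mem_univ, true_and] at hx ⊢
    exact lt_trans hx h
  · intro hsub
    have : G ∈ Finset.univ.filter (fun H' : Finset (Fin n) => U H' < U H) := by
      simp [h]
    have := hsub this
    simp at this

/-- Weight of a group. -/
noncomputable def w (U : Finset (Fin n) → ℝ) (G : Finset (Fin n)) : ℕ :=
  G.card * (n + 1) ^ (rk U G)

/-- Potential of a collection of groups. -/
noncomputable def Φ (U : Finset (Fin n) → ℝ) (P : Finset (Finset (Fin n))) : ℕ :=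
  ∑ G ∈ P, w U G

/-- Invariant: groups nonempty and pairwise disjoint. -/
def GInv (P : Finset (Finset (Fin n))) : Prop :=
  (∀ G ∈ P, G.Nonempty) ∧ ∀ G ∈ P, ∀ H ∈ P, G ≠ H → Disjoint G H

lemma inv_of_partition {P : Finset (Finset (Fin n))} (hP : IsGroupPartition P) :
    GInv P := by
  refine ⟨hP.1, fun G hG H hH hne => ?_⟩
  rw [Finset.disjoint_left]
  intro i hiG hiH
  obtain ⟨G', -, huniq⟩ := hP.2 i
  exact hne ((huniq G ⟨hG, hiG⟩).trans (huniq H ⟨hH, hiH⟩).symm)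

lemma step_key {U : Finset (Fin n) → ℝ} {P P' : Finset (Finset (Fin n))}
    (hInv : GInv P) (hstep : ImprovingStep U P P') :
    GInv P' ∧ Φ U P < Φ U P' := by
  obtain ⟨Gk, hGk, S, hSGk, hSne, Gk', hGk', hgt, hge, hP'⟩ := hstep
  set Q := (P.erase Gk).erase Gk' with hQdef
  -- basic facts
  have hQmem : ∀ H ∈ Q, H ∈ P ∧ H ≠ Gk ∧ H ≠ Gk' := by
    intro H hH
    rw [hQdef, Finset.mem_erase, Finset.mem_erase] at hH
    exact ⟨hH.2.2, hH.2.1, hH.1⟩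
  have hdisjGG' : Disjoint Gk Gk' := by
    rcases hGk' with h | ⟨h1, h2⟩
    · simp [h]
    · exact hInv.2 Gk hGk Gk' h1 (Ne.symm h2)
  have hdisjSG' : Disjoint Gk' S := (hdisjGG'.mono_left hSGk).symm
  have hcardU : (Gk' ∪ S).card = Gk'.card + S.card :=
    Finset.card_union_of_disjoint hdisjSG'
  have hG'Sne : Gk' ∪ S ≠ ∅ := by
    intro h
    obtain ⟨x, hx⟩ := hSne
    have : x ∈ Gk' ∪ S := Finset.mem_union_right _ hx
    simp [h] at this
  have hpairne : Gk \ S ≠ Gk' ∪ S := by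
    intro h
    obtain ⟨x, hx⟩ := hSne
    have hx1 : x ∈ Gk' ∪ S := Finset.mem_union_right _ hx
    rw [← h, Finset.mem_sdiff] at hx1
    exact hx1.2 hx
  have hG'S_notQ : Gk' ∪ S ∉ Q := by
    intro hmem
    obtain ⟨hP1, hne1, -⟩ := hQmem _ hmem
    have hdisj : Disjoint (Gk' ∪ S) Gk := hInv.2 _ hP1 Gk hGk hne1
    obtain ⟨x, hx⟩ := hSne
    exact (Finset.disjoint_left.1 hdisj) (Finset.mem_union_right _ hx) (hSGk hx)
  have hGS_notQ : Gk \ S ∉ Q := by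
    intro hmem
    obtain ⟨hP1, hne1, -⟩ := hQmem _ hmem
    have hdisj : Disjoint (Gk \ S) Gk := hInv.2 _ hP1 Gk hGk hne1
    have hne2 : (Gk \ S).Nonempty := hInv.1 _ hP1
    obtain ⟨x, hx⟩ := hne2
    exact (Finset.disjoint_left.1 hdisj) hx (Finset.mem_sdiff.1 hx).1
  have hQdisj : Disjoint Q ({Gk \ S, Gk' ∪ S} : Finset (Finset (Fin n))) := by
    rw [Finset.disjoint_right]
    intro x hx
    rw [Finset.mem_insert, Finset.mem_singleton] at hx
    rcases hx with h | h <;> subst h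
    · exact hGS_notQ
    · exact hG'S_notQ
  -- sum over P'
  have hwempty : w U (∅ : Finset (Fin n)) = 0 := by simp [w]
  have hΦP' : Φ U P' = Φ U Q + (w U (Gk \ S) + w U (Gk' ∪ S)) := by
    rw [hP']
    rw [Φ, Finset.sum_erase _ hwempty]
    rw [Finset.sum_union hQdisj, Finset.sum_pair hpairne]
    rfl
  -- sum over P
  have hΦP : Φ U P = Φ U Q + (w U Gk + w U Gk') := by
    rcases hGk' with h | ⟨h1, h2⟩
    · have hempty_not : (∅ : Finset (Fin n)) ∉ P.erase Gk := by
        intro hmem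
        have := hInv.1 _ (Finset.mem_of_mem_erase hmem)
        simp [Finset.nonempty_iff_ne_empty] at this
      have : Q = P.erase Gk := by rw [hQdef, h, Finset.erase_eq_of_notMem hempty_not]
      rw [this, h, hwempty]
      have := Finset.sum_erase_add P (w U) hGk
      rw [Φ, Φ]
      omega
    · have h3 : Gk' ∈ P.erase Gk := Finset.mem_erase.2 ⟨h2, h1⟩
      have e1 := Finset.sum_erase_add P (w U) hGk
      have e2 := Finset.sum_erase_add (P.erase Gk) (w U) h3
      rw [Φ, Φ]
      rw [hQdef] at *
      omega
  -- the arithmetic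
  have harith : w U Gk + w U Gk' < w U (Gk \ S) + w U (Gk' ∪ S) := by
    have ha : rk U Gk < rk U (Gk' ∪ S) := rk_lt hgt
    have hb : Gk'.card * (n + 1) ^ rk U Gk' ≤ Gk'.card * (n + 1) ^ rk U (Gk' ∪ S) := by
      rcases eq_or_ne Gk' ∅ with h | h
      · simp [h]
      · exact Nat.mul_le_mul_left _ (Nat.pow_le_pow_right (Nat.succ_pos n) (rk_le (hge h)))
    have hGkcard : Gk.card ≤ n := by
      have := Finset.card_le_univ Gk
      simpa using this
    have hScard : 1 ≤ S.card := Finset.card_pos.2 hSne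
    have h1 : Gk.card * (n + 1) ^ rk U Gk < 1 * (n + 1) ^ rk U (Gk' ∪ S) := by
      calc Gk.card * (n + 1) ^ rk U Gk ≤ n * (n + 1) ^ rk U Gk :=
            Nat.mul_le_mul_right _ hGkcard
        _ < (n + 1) * (n + 1) ^ rk U Gk := by
            have : (0:ℕ) < (n + 1) ^ rk U Gk := Nat.pow_pos (Nat.succ_pos n)
            exact (Nat.mul_lt_mul_right this).2 (Nat.lt_succ_self n)
        _ = (n + 1) ^ (rk U Gk + 1) := by ring
        _ ≤ (n + 1) ^ rk U (Gk' ∪ S) := Nat.pow_le_pow_right (Nat.succ_pos n) ha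
        _ = 1 * (n + 1) ^ rk U (Gk' ∪ S) := by ring
    have hrhs : w U (Gk' ∪ S) = (Gk'.card + S.card) * (n + 1) ^ rk U (Gk' ∪ S) := by
      rw [w, hcardU]
    rw [w, w, hrhs]
    have h2 : 1 * (n + 1) ^ rk U (Gk' ∪ S) ≤ S.card * (n + 1) ^ rk U (Gk' ∪ S) :=
      Nat.mul_le_mul_right _ hScard
    nlinarith [Nat.zero_le (w U (Gk \ S))]
  -- invariant for P'
  have hInv' : GInv P' := by
    have hmemP' : ∀ x ∈ P', x ≠ ∅ ∧ (x ∈ Q ∨ x = Gk \ S ∨ x = Gk' ∪ S) := by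
      intro x hx
      rw [hP', Finset.mem_erase, Finset.mem_union, Finset.mem_insert,
        Finset.mem_singleton] at hx
      exact ⟨hx.1, hx.2⟩
    constructor
    · intro G hG
      exact Finset.nonempty_iff_ne_empty.2 (hmemP' G hG).1
    · intro G hG H hH hne
      obtain ⟨hGne, hGcase⟩ := hmemP' G hG
      obtain ⟨hHne, hHcase⟩ := hmemP' H hH
      -- helper disjointness facts
      have hQ_Gk : ∀ x ∈ Q, Disjoint x Gk := fun x hx =>
        hInv.2 x (hQmem x hx).1 Gk hGk (hQmem x hx).2.1
      have hQ_Gk' : ∀ x ∈ Q, Disjoint x Gk' := by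
        intro x hx
        rcases eq_or_ne Gk' ∅ with h | h
        · simp [h]
        · rcases hGk' with h' | ⟨h1, -⟩
          · exact absurd h' h
          · exact hInv.2 x (hQmem x hx).1 Gk' h1 (hQmem x hx).2.2
      have hQ_new1 : ∀ x ∈ Q, Disjoint x (Gk \ S) := fun x hx =>
        (hQ_Gk x hx).mono_right (Finset.sdiff_subset)
      have hQ_new2 : ∀ x ∈ Q, Disjoint x (Gk' ∪ S) := fun x hx => by
        rw [Finset.disjoint_union_right]
        exact ⟨hQ_Gk' x hx, (hQ_Gk x hx).mono_right hSGk⟩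
      have hnew12 : Disjoint (Gk \ S) (Gk' ∪ S) := by
        rw [Finset.disjoint_union_right]
        exact ⟨(hdisjGG'.mono_left Finset.sdiff_subset),
          Finset.sdiff_disjoint⟩
      rcases hGcase with hG1 | hG1 | hG1 <;> rcases hHcase with hH1 | hH1 | hH1
      · exact hInv.2 G (hQmem G hG1).1 H (hQmem H hH1).1 hne
      · subst hH1; exact hQ_new1 G hG1
      · subst hH1; exact hQ_new2 G hG1
      · subst hG1; exact (hQ_new1 H hH1).symm
      · subst hG1; subst hH1; exact absurd rfl hne
      · subst hG1; subst hH1; exact hnew12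
      · subst hG1; exact (hQ_new2 H hH1).symm
      · subst hG1; subst hH1; exact hnew12.symm
      · subst hG1; subst hH1; exact absurd rfl hne
  exact ⟨hInv', by omega⟩

end Stmt3Aux

open Stmt3Aux in
/-- Any sequence of improving deviations terminates in finitely many steps (there is
no infinite sequence of improving deviations starting from a partition), and any
terminal partition (one admitting no improving deviation) is a Strong Acceptance
Equilibrium. -/
theorem stmt3 {n : ℕ} (U : Finset (Fin n) → ℝ) :
    (¬ ∃ seq : ℕ → Finset (Finset (Fin n)),
        IsGroupPartition (seq 0) ∧ ∀ t, ImprovingStep U (seq t) (seq (t + 1))) ∧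
    (∀ P : Finset (Finset (Fin n)), IsGroupPartition P →
      (∀ P', ¬ ImprovingStep U P P') →
      ∀ G ∈ P, ∀ S ⊆ G, S.Nonempty →
        U G ≥ U S ∧
        ∀ G' ∈ P, G' ≠ G → (U G ≥ U (G' ∪ S) ∨ U G' > U (G' ∪ S))) := by
  constructor
  · rintro ⟨seq, h0, hstep⟩
    have hInvAll : ∀ t, GInv (seq t) := by
      intro t
      induction t with
      | zero => exact inv_of_partition h0
      | succ t ih => exact (step_key ih (hstep t)).1
    have hmono : ∀ t, Φ U (seq t) < Φ U (seq (t + 1)) := fun t =>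
      (step_key (hInvAll t) (hstep t)).2
    have hsm : StrictMono (fun t => Φ U (seq t)) := strictMono_nat_of_lt_succ hmono
    set B : ℕ := ∑ G ∈ (Finset.univ : Finset (Finset (Fin n))), w U G with hB
    have hbound : ∀ t, Φ U (seq t) ≤ B := by
      intro t
      exact Finset.sum_le_sum_of_subset (Finset.subset_univ _)
    have hle := hsm.le_apply (x := B + 1)
    have := hbound (B + 1)
    omega
  · intro P hP hnostep G hG S hSG hSne
    constructor
    · by_contra h
      push_neg at h
      apply hnostep ((((P.erase G).erase ∅) ∪ {G \ S, ∅ ∪ S}).erase ∅)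
      exact ⟨G, hG, S, hSG, hSne, ∅, Or.inl rfl,
        by simpa using h, fun hc => absurd rfl hc, rfl⟩
    · intro G' hG' hne
      by_contra h
      push_neg at h
      obtain ⟨h1, h2⟩ := h
      apply hnostep ((((P.erase G).erase G') ∪ {G \ S, G' ∪ S}).erase ∅)
      exact ⟨G, hG, S, hSG, hSne, G', Or.inr ⟨hG', hne⟩, h1, fun _ => h2, rfl⟩
end

section
/- The greedy construction that iteratively selects, among the remaining agents, a subset of maximum utility (breaking ties in favor of larger cardinality) as the next group produces a Strong Acceptance Equilibrium in which the first group has the maximum utility among all subsets of N. -/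
/-- The greedy construction: `N₁ = N`; at step `k` pick `G k ⊆ Nk k` of maximum
utility among nonempty subsets of the remaining agents `Nk k` (ties broken in favor
of larger cardinality), and remove it. The resulting partition is a Strong
Acceptance Equilibrium, and the first group has maximum utility among all nonempty
subsets of `N`. -/
theorem stmt4 {n : ℕ} (U : Finset (Fin n) → ℝ)
    (m : ℕ) (hm : 0 < m)
    (G : ℕ → Finset (Fin n)) (Nk : ℕ → Finset (Fin n))
    (hNk : ∀ k, Nk k = Finset.univ \ (Finset.range k).biUnion G)
    (hne : ∀ k < m, (G k).Nonempty)
    (hsub : ∀ k < m, G k ⊆ Nk k)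
    (hmax : ∀ k < m, ∀ S ⊆ Nk k, S.Nonempty → U S ≤ U (G k))
    (hcard : ∀ k < m, ∀ S ⊆ Nk k, S.Nonempty → U S = U (G k) → S.card ≤ (G k).card)
    (hstop : Nk m = ∅)
    (P : Finset (Finset (Fin n))) (hP : P = (Finset.range m).image G) :
    (∀ S : Finset (Fin n), S.Nonempty → U S ≤ U (G 0)) ∧
    ∀ Gp ∈ P, ∀ S ⊆ Gp, S.Nonempty →
      U Gp ≥ U S ∧
      ∀ G' ∈ P, G' ≠ Gp → (U Gp ≥ U (G' ∪ S) ∨ U G' > U (G' ∪ S)) := by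
  have mono : ∀ {j k : ℕ}, j ≤ k → Nk k ⊆ Nk j := by
    intro j k hjk
    rw [hNk, hNk]
    exact Finset.sdiff_subset_sdiff (le_refl _)
      (Finset.biUnion_subset_biUnion_of_subset_left _ (Finset.range_subset_range.2 hjk))
  have notin : ∀ {j k : ℕ}, j < k → ∀ x ∈ Nk k, x ∉ G j := by
    intro j k hjk x hx hxG
    rw [hNk] at hx
    exact (Finset.mem_sdiff.1 hx).2
      (Finset.mem_biUnion.2 ⟨j, Finset.mem_range.2 hjk, hxG⟩)
  have h0 : Nk 0 = Finset.univ := by simp [hNk]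
  constructor
  · intro S hS
    exact hmax 0 hm S (by simp [h0]) hS
  · intro Gp hGp S hSsub hSne
    rw [hP] at hGp
    obtain ⟨k, hkm, hkG⟩ := Finset.mem_image.1 hGp
    rw [Finset.mem_range] at hkm
    have hSNk : S ⊆ Nk k := hSsub.trans (by rw [← hkG]; exact hsub k hkm)
    constructor
    · rw [← hkG]; exact hmax k hkm S hSNk hSne
    · intro G' hG' hne'
      rw [hP] at hG'
      obtain ⟨j, hjm, hjG⟩ := Finset.mem_image.1 hG'
      rw [Finset.mem_range] at hjm
      rcases lt_trichotomy j k with hjk | hjk | hjk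
      · right
        have hUsub : G' ∪ S ⊆ Nk j := by
          rw [← hjG]
          exact Finset.union_subset (hsub j hjm) (hSNk.trans (mono hjk.le))
        have hUne : (G' ∪ S).Nonempty := hSne.mono Finset.subset_union_right
        have hle : U (G' ∪ S) ≤ U (G j) := hmax j hjm _ hUsub hUne
        rw [hjG] at hle
        rcases lt_or_eq_of_le hle with h | h
        · exact h
        · exfalso
          have hc := hcard j hjm _ hUsub hUne (by rw [hjG]; exact h)
          have hss : G j ⊂ G' ∪ S := by
            rw [← hjG]
            refine Finset.ssubset_iff_of_subset Finset.subset_union_left |>.2 ?_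
            obtain ⟨x, hx⟩ := hSne
            exact ⟨x, Finset.mem_union_right _ hx, notin hjk x (hSNk hx)⟩
          exact absurd hc (not_le.2 (Finset.card_lt_card hss))
      · exact absurd (by rw [← hjG, ← hkG, hjk]) hne'
      · left
        have hUsub : G' ∪ S ⊆ Nk k := by
          rw [← hjG]
          exact Finset.union_subset ((hsub j hjm).trans (mono hjk.le)) hSNk
        have hUne : (G' ∪ S).Nonempty := hSne.mono Finset.subset_union_right
        have := hmax k hkm _ hUsub hUne
        rw [hkG] at this
        exact this
end

section
/- In any Acceptance Equilibrium of the geometric group formation game, no two distinct groups are mutually encroaching: there do not exist groups G, G' with an agent of G located in the convex hull of G' and an agent of G' located in the convex hull of G. -/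
/-- In any Acceptance Equilibrium of the geometric group formation game
(locations `x i ∈ ℝ^d`, positive resources `r i`, coverage `D` invariant under
adding a point of the convex hull, utility `U G = f (∑ i ∈ G, r i) (D G)` with `f`
strictly increasing in resources and strictly decreasing in coverage), no two
distinct groups are mutually encroaching. -/
theorem stmt6 {n d : ℕ}
    (x : Fin n → EuclideanSpace ℝ (Fin d)) (r : Fin n → ℝ)
    (hr : ∀ i, 0 < r i)
    (D : Finset (Fin n) → ℝ)
    (hD : ∀ (G : Finset (Fin n)) (i : Fin n),
      x i ∈ convexHull ℝ (x '' ↑G) → D (insert i G) = D G)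
    (f : ℝ → ℝ → ℝ)
    (hf1 : ∀ c : ℝ, StrictMono fun R => f R c)
    (hf2 : ∀ R : ℝ, StrictAnti (f R))
    (U : Finset (Fin n) → ℝ) (hU : ∀ G, U G = f (∑ i ∈ G, r i) (D G))
    (P : Finset (Finset (Fin n)))
    (hP : (∀ G ∈ P, G.Nonempty) ∧ ∀ i : Fin n, ∃! G, G ∈ P ∧ i ∈ G)
    (hAE : ∀ G ∈ P, ∀ i ∈ G, ∀ G' ∈ P, G' ≠ G →
      U G ≥ U (insert i G') ∨ U G' > U (insert i G')) :
    ¬ ∃ G ∈ P, ∃ G' ∈ P, G ≠ G' ∧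
        (∃ i ∈ G, x i ∈ convexHull ℝ (x '' ↑G')) ∧
        (∃ j ∈ G', x j ∈ convexHull ℝ (x '' ↑G)) := by
  rintro ⟨G, hG, G', hG', hne, ⟨i, hiG, hix⟩, ⟨j, hjG', hjx⟩⟩
  have key : ∀ A ∈ P, ∀ B ∈ P, A ≠ B → ∀ k ∈ A,
      x k ∈ convexHull ℝ (x '' ↑B) → U A > U B := by
    intro A hA B hB hAB k hkA hkx
    have hkB : k ∉ B := by
      intro hkB
      obtain ⟨C, _, huniq⟩ := hP.2 k
      exact hAB ((huniq A ⟨hA, hkA⟩).trans (huniq B ⟨hB, hkB⟩).symm)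
    have hUins : U (insert k B) > U B := by
      rw [hU, hU, hD B k hkx, Finset.sum_insert hkB]
      exact hf1 (D B) (by linarith [hr k])
    rcases hAE A hA k hkA B hB (Ne.symm hAB) with h | h
    · linarith
    · linarith
  have h1 := key G hG G' hG' hne i hiG hix
  have h2 := key G' hG' G hG (Ne.symm hne) j hjG' hjx
  linarith
end

section
/- In any Acceptance Equilibrium of the geometric group formation game, if group G encroaches on group G' (some member of G lies in the convex hull of G''s locations), then U_G > U_{G'}. -/
/-- In any Acceptance Equilibrium of the geometric group formation game, if group
`G` encroaches on group `G'` (some member of `G` lies in the convex hull of the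
locations of `G'`'s members), then `U G > U G'`. -/
theorem stmt7 {n d : ℕ}
    (x : Fin n → EuclideanSpace ℝ (Fin d)) (r : Fin n → ℝ)
    (hr : ∀ i, 0 < r i)
    (D : Finset (Fin n) → ℝ)
    (hD : ∀ (G : Finset (Fin n)) (i : Fin n),
      x i ∈ convexHull ℝ (x '' ↑G) → D (insert i G) = D G)
    (f : ℝ → ℝ → ℝ)
    (hf1 : ∀ c : ℝ, StrictMono fun R => f R c)
    (hf2 : ∀ R : ℝ, StrictAnti (f R))
    (U : Finset (Fin n) → ℝ) (hU : ∀ G, U G = f (∑ i ∈ G, r i) (D G))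
    (P : Finset (Finset (Fin n)))
    (hP : (∀ G ∈ P, G.Nonempty) ∧ ∀ i : Fin n, ∃! G, G ∈ P ∧ i ∈ G)
    (hAE : ∀ G ∈ P, ∀ i ∈ G, ∀ G' ∈ P, G' ≠ G →
      U G ≥ U (insert i G') ∨ U G' > U (insert i G'))
    (G G' : Finset (Fin n)) (hG : G ∈ P) (hG' : G' ∈ P) (hne : G ≠ G')
    (henc : ∃ i ∈ G, x i ∈ convexHull ℝ (x '' ↑G')) :
    U G > U G' := by
  obtain ⟨i, hiG, hconv⟩ := henc
  have hiG' : i ∉ G' := by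
    intro hiG'
    obtain ⟨Q, _, huniq⟩ := hP.2 i
    exact hne ((huniq G ⟨hG, hiG⟩).trans (huniq G' ⟨hG', hiG'⟩).symm)
  have hsum : ∑ j ∈ insert i G', r j = r i + ∑ j ∈ G', r j :=
    Finset.sum_insert hiG'
  have hUins : U (insert i G') > U G' := by
    rw [hU, hU, hD G' i hconv, hsum]
    exact hf1 (D G') (by linarith [hr i])
  rcases hAE G hG i hiG G' hG' (Ne.symm hne) with h | h
  · exact lt_of_lt_of_le hUins h
  · exact absurd hUins (not_lt.2 h.le)
end

section
/- For every Acceptance Equilibrium of the geometric group formation game, the encroachment graph—whose nodes are the groups of the partition and which has a directed edge from G to G' whenever some member of G is located in the convex hull of G''s member locations—is a directed acyclic graph. -/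
/-- For every Acceptance Equilibrium of the geometric group formation game, the
encroachment graph — whose nodes are the groups of the partition, with a directed
edge from `G` to `G'` whenever `G ≠ G'` and some member of `G` lies in the convex
hull of the locations of `G'`'s members — is acyclic (no directed cycle, i.e. the
transitive closure of the edge relation is irreflexive). -/
theorem stmt8 {n d : ℕ}
    (x : Fin n → EuclideanSpace ℝ (Fin d)) (r : Fin n → ℝ)
    (hr : ∀ i, 0 < r i)
    (D : Finset (Fin n) → ℝ)
    (hD : ∀ (G : Finset (Fin n)) (i : Fin n),
      x i ∈ convexHull ℝ (x '' ↑G) → D (insert i G) = D G)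
    (f : ℝ → ℝ → ℝ)
    (hf1 : ∀ c : ℝ, StrictMono fun R => f R c)
    (hf2 : ∀ R : ℝ, StrictAnti (f R))
    (U : Finset (Fin n) → ℝ) (hU : ∀ G, U G = f (∑ i ∈ G, r i) (D G))
    (P : Finset (Finset (Fin n)))
    (hP : (∀ G ∈ P, G.Nonempty) ∧ ∀ i : Fin n, ∃! G, G ∈ P ∧ i ∈ G)
    (hAE : ∀ G ∈ P, ∀ i ∈ G, ∀ G' ∈ P, G' ≠ G →
      U G ≥ U (insert i G') ∨ U G' > U (insert i G')) :
    ∀ G : Finset (Fin n),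
      ¬ Relation.TransGen
          (fun A B => A ∈ P ∧ B ∈ P ∧ A ≠ B ∧
            ∃ i ∈ A, x i ∈ convexHull ℝ (x '' ↑B)) G G := by
  intro G hG
  have key : ∀ A B, (A ∈ P ∧ B ∈ P ∧ A ≠ B ∧
      ∃ i ∈ A, x i ∈ convexHull ℝ (x '' ↑B)) → U B < U A := by
    rintro A B ⟨hA, hB, hne, i, hiA, hih⟩
    have hiB : i ∉ B := by
      intro hiB
      obtain ⟨Q, _, huniq⟩ := hP.2 i
      exact hne ((huniq A ⟨hA, hiA⟩).trans (huniq B ⟨hB, hiB⟩).symm)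
    have hlt : U B < U (insert i B) := by
      rw [hU, hU, Finset.sum_insert hiB, hD B i hih]
      exact hf1 (D B) (by linarith [hr i])
    rcases hAE A hA i hiA B hB hne.symm with h | h
    · exact lt_of_lt_of_le hlt h
    · exact absurd hlt (not_lt.mpr h.le)
  have main : ∀ B, Relation.TransGen
      (fun A B => A ∈ P ∧ B ∈ P ∧ A ≠ B ∧
        ∃ i ∈ A, x i ∈ convexHull ℝ (x '' ↑B)) G B → U B < U G := by
    intro B h
    induction h with
    | single h => exact key _ _ h
    | tail _ h ih => exact lt_trans (key _ _ h) ih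
  exact lt_irrefl _ (main G hG)
end

section
/- Let f(R, D) = g(R)/h(D) where h : ℝ → ℝ_{>0} is increasing and g : ℝ → ℝ_{>0} is increasing with limsup_{R→∞} log(g(R))/R = 0 (sub-exponential). Then for all r, D, δ > 0: limsup_{R→∞} f(R, D)/f(R + r, D + δ) > 1. -/
open Filter

/-- Let `f (R, D) = g R / h D` where `h : ℝ → ℝ_{>0}` is (strictly) increasing and
`g : ℝ → ℝ_{>0}` is increasing and sub-exponential, i.e.
`limsup_{R→∞} log (g R) / R = 0`. Then for all `r, D, δ > 0`,
`limsup_{R→∞} f (R, D) / f (R + r, D + δ) > 1`.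
(The limsups are taken in `EReal` so that unbounded functions are handled
correctly.) -/
theorem stmt10 (g h : ℝ → ℝ)
    (hg0 : ∀ R, 0 < g R) (hh0 : ∀ c, 0 < h c)
    (hgm : Monotone g) (hhm : StrictMono h)
    (hsub : limsup (fun R => ((Real.log (g R) / R : ℝ) : EReal)) atTop = 0) :
    ∀ r D δ : ℝ, 0 < r → 0 < D → 0 < δ →
      1 < limsup
          (fun R => (((g R / h D) / (g (R + r) / h (D + δ)) : ℝ) : EReal))
          atTop := by
  intro r D δ hr hD hδ
  by_contra hcon
  push_neg at hcon
  set c : ℝ := h (D + δ) / h D with hc_def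
  have hc : 1 < c := by
    rw [hc_def, lt_div_iff₀ (hh0 D), one_mul]
    exact hhm (by linarith)
  set ε : ℝ := (c - 1) / 2 with hε_def
  have hε : 0 < ε := by dsimp [ε]; linarith
  have hεc : 1 + ε < c := by dsimp [ε]; linarith
  set K : ℝ := c / (1 + ε) with hK_def
  have hK : 1 < K := by
    rw [hK_def, lt_div_iff₀ (by linarith), one_mul]; exact hεc
  set a : ℝ := Real.log K with ha_def
  have ha : 0 < a := Real.log_pos hK
  -- eventually, the ratio is < 1 + ε
  have hev : ∀ᶠ R in atTop, ((g R / h D) / (g (R + r) / h (D + δ)) : ℝ) < 1 + ε := by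
    have h1 : limsup (fun R => (((g R / h D) / (g (R + r) / h (D + δ)) : ℝ) : EReal)) atTop
        < ((1 + ε : ℝ) : EReal) := by
      refine lt_of_le_of_lt hcon ?_
      have : ((1 : ℝ) : EReal) < ((1 + ε : ℝ) : EReal) := by
        exact_mod_cast (by linarith : (1:ℝ) < 1 + ε)
      simpa using this
    have := eventually_lt_of_limsup_lt h1
    filter_upwards [this] with R hR
    exact_mod_cast hR
  obtain ⟨R₀, hR₀⟩ := (hev.and (eventually_ge_atTop (1 : ℝ))).exists_forall_of_atTop
  have hR₀pos : 0 < R₀ := lt_of_lt_of_le one_pos (hR₀ R₀ le_rfl).2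
  -- key step: K * g R < g (R + r) for R ≥ R₀
  have key : ∀ R ≥ R₀, K * g R < g (R + r) := by
    intro R hR
    have h1 := (hR₀ R hR).1
    have hgR := hg0 R
    have hgRr := hg0 (R + r)
    have hhD := hh0 D
    have hhDδ := hh0 (D + δ)
    have hrw : (g R / h D) / (g (R + r) / h (D + δ)) = (g R / g (R + r)) * c := by
      field_simp [hc_def]
      rw [hc_def]; field_simp
    rw [hrw] at h1
    rw [hK_def]
    rw [div_mul_eq_mul_div, div_lt_iff₀ hgRr] at h1
    rw [div_mul_eq_mul_div, div_lt_iff₀ (by linarith : (0:ℝ) < 1 + ε)]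
    nlinarith [h1]
  -- iterate: g (R₀ + n r) ≥ K^n * g R₀
  have iter : ∀ n : ℕ, K ^ n * g R₀ ≤ g (R₀ + n * r) := by
    intro n
    induction n with
    | zero => simp
    | succ n ih =>
      have h1 : K * g (R₀ + n * r) < g (R₀ + n * r + r) :=
        key _ (by nlinarith [n.cast_nonneg (α := ℝ)])
      have h2 : R₀ + n * r + r = R₀ + (n + 1 : ℕ) * r := by push_cast; ring
      rw [h2] at h1
      calc K ^ (n + 1) * g R₀ = K * (K ^ n * g R₀) := by ring
        _ ≤ K * g (R₀ + n * r) := by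
            have := mul_le_mul_of_nonneg_left ih (le_of_lt (lt_trans one_pos hK))
            linarith [this]
        _ ≤ g (R₀ + (n + 1 : ℕ) * r) := le_of_lt h1
  set L : ℝ := Real.log (g R₀) with hL_def
  have hlog : ∀ n : ℕ, n * a + L ≤ Real.log (g (R₀ + n * r)) := by
    intro n
    have h1 := iter n
    have h2 : Real.log (K ^ n * g R₀) ≤ Real.log (g (R₀ + n * r)) :=
      Real.log_le_log (mul_pos (pow_pos (lt_trans one_pos hK) n) (hg0 R₀)) h1
    rwa [Real.log_mul (by positivity) (ne_of_gt (hg0 R₀)), Real.log_pow, ha_def.symm] at h2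
  set b : ℝ := a / (2 * r) with hb_def
  have hb : 0 < b := by positivity
  -- frequently, log g R / R ≥ b
  have hfreq : ∃ᶠ R in atTop, (b:ℝ) ≤ Real.log (g R) / R := by
    rw [frequently_atTop]
    intro N
    -- choose n large
    obtain ⟨n₁, hn₁⟩ := exists_nat_ge ((N - R₀) / r)
    obtain ⟨n₂, hn₂⟩ := exists_nat_ge ((b * R₀ - L) / (a / 2))
    set n : ℕ := max n₁ n₂ with hn_def
    have hn1 : ((N - R₀) / r : ℝ) ≤ n := le_trans hn₁ (by exact_mod_cast Nat.le_max_left n₁ n₂)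
    have hn2 : ((b * R₀ - L) / (a / 2) : ℝ) ≤ n := le_trans hn₂ (by exact_mod_cast Nat.le_max_right n₁ n₂)
    refine ⟨R₀ + n * r, ?_, ?_⟩
    · rw [div_le_iff₀ hr] at hn1; linarith
    · have hx : (0:ℝ) < R₀ + n * r := by have := n.cast_nonneg (α := ℝ); nlinarith
      rw [le_div_iff₀ hx]
      refine le_trans ?_ (hlog n)
      rw [div_le_iff₀ (by positivity : (0:ℝ) < a / 2)] at hn2
      have : b * (R₀ + n * r) = b * R₀ + n * (b * r) := by ring
      rw [this]
      have hbr : b * r = a / 2 := by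
        rw [hb_def]; field_simp
      rw [hbr]
      nlinarith [hn2]
  -- contradiction with hsub
  have hlim : ((b : ℝ) : EReal) ≤ limsup (fun R => ((Real.log (g R) / R : ℝ) : EReal)) atTop := by
    apply le_limsup_of_frequently_le
    · apply hfreq.mono
      intro R hR
      exact_mod_cast hR
    · exact ⟨⊤, Eventually.of_forall fun _ => le_top⟩
  rw [hsub] at hlim
  have : (0:ℝ) < b := hb
  exact absurd hlim (by exact_mod_cast not_le.mpr this)
end

section
/- If g : ℝ → ℝ_{>0} is increasing and satisfies limsup_{R→∞} log(g(R))/R = 0, then for every r > 0, limsup_{R→∞} g(R)/g(R + r) = 1. -/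
open Filter

/-- If `g : ℝ → ℝ_{>0}` is increasing and sub-exponential, i.e.
`limsup_{R→∞} log (g R) / R = 0`, then for every `r > 0`,
`limsup_{R→∞} g R / g (R + r) = 1`. (Limsups taken in `EReal`.) -/
theorem stmt11 (g : ℝ → ℝ)
    (hg0 : ∀ R, 0 < g R) (hgm : Monotone g)
    (hsub : limsup (fun R => ((Real.log (g R) / R : ℝ) : EReal)) atTop = 0) :
    ∀ r : ℝ, 0 < r →
      limsup (fun R => ((g R / g (R + r) : ℝ) : EReal)) atTop = 1 := by
  intro r hr
  apply le_antisymm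
  · apply limsup_le_of_le (by isBoundedDefault)
    filter_upwards with R
    have h1 : g R / g (R + r) ≤ 1 := by
      rw [div_le_one (hg0 _)]
      exact hgm (by linarith)
    exact_mod_cast h1
  · rw [le_limsup_iff]
    intro b hb
    by_contra hcon
    rw [not_frequently] at hcon
    have hev : ∀ᶠ R in atTop, ((g R / g (R + r) : ℝ) : EReal) ≤ b := by
      filter_upwards [hcon] with R h
      exact not_lt.mp h
    have hbpos : (0 : EReal) < b := by
      obtain ⟨R, hR⟩ := hev.exists
      calc (0:EReal) < ((g R / g (R+r) : ℝ) : EReal) := by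
            exact_mod_cast div_pos (hg0 R) (hg0 (R+r))
        _ ≤ b := hR
    have hbt : b ≠ ⊤ := (hb.trans (by rw [← EReal.coe_one]; exact EReal.coe_lt_top 1)).ne
    have hbb : b ≠ ⊥ := hbpos.ne_bot
    set c : ℝ := b.toReal with hcdef
    have hbc : b = (c : EReal) := (EReal.coe_toReal hbt hbb).symm
    have hc0 : 0 < c := by
      rw [hbc] at hbpos; exact_mod_cast hbpos
    have hc1 : c < 1 := by
      rw [hbc] at hb; exact_mod_cast hb
    -- eventually g R ≤ c * g (R + r)
    obtain ⟨R₀, hR₀⟩ : ∃ R₀, ∀ R ≥ R₀, g R ≤ c * g (R + r) := by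
      rw [hbc] at hev
      rw [eventually_atTop] at hev
      obtain ⟨R₀, h⟩ := hev
      refine ⟨R₀, fun R hR => ?_⟩
      have := h R hR
      have h2 : g R / g (R + r) ≤ c := by exact_mod_cast this
      rwa [div_le_iff₀ (hg0 _)] at h2
    set A : ℝ := -Real.log c with hAdef
    have hA : 0 < A := by
      have := Real.log_neg hc0 hc1
      simp only [hAdef]; linarith
    -- key induction
    have key : ∀ n : ℕ, g R₀ ≤ c ^ n * g (R₀ + n * r) := by
      intro n
      induction n with
      | zero => simp
      | succ m ih =>
        have hm : (0:ℝ) ≤ (m : ℝ) := m.cast_nonneg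
        have h := hR₀ (R₀ + m * r) (by nlinarith)
        calc g R₀ ≤ c ^ m * g (R₀ + m * r) := ih
          _ ≤ c ^ m * (c * g (R₀ + m * r + r)) :=
              mul_le_mul_of_nonneg_left h (pow_nonneg hc0.le m)
          _ = c ^ (m + 1) * g (R₀ + (m + 1 : ℕ) * r) := by
              rw [show R₀ + ((m + 1 : ℕ) : ℝ) * r = R₀ + m * r + r by push_cast; ring]
              ring
    set C : ℝ := Real.log (g R₀) - A - R₀ * A / r with hCdef
    have hbound : ∀ R ≥ max R₀ 1, A / r + C / R ≤ Real.log (g R) / R := by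
      intro R hR
      have hRR₀ : R₀ ≤ R := le_trans (le_max_left _ _) hR
      have hR1 : (1:ℝ) ≤ R := le_trans (le_max_right _ _) hR
      have hRpos : 0 < R := by linarith
      have hnn : (0:ℝ) ≤ (R - R₀) / r := div_nonneg (by linarith) hr.le
      have hfl : (0:ℤ) ≤ ⌊(R - R₀) / r⌋ := Int.floor_nonneg.mpr hnn
      set n : ℕ := (⌊(R - R₀) / r⌋).toNat with hndef
      have hn : ((n:ℝ)) = ((⌊(R - R₀) / r⌋ : ℤ) : ℝ) := by
        exact_mod_cast Int.toNat_of_nonneg hfl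
      have h1 : (n:ℝ) ≤ (R - R₀) / r := by rw [hn]; exact Int.floor_le _
      have h2 : (R - R₀) / r < (n:ℝ) + 1 := by rw [hn]; exact Int.lt_floor_add_one _
      have hle : R₀ + n * r ≤ R := by
        have := (le_div_iff₀ hr).mp h1
        linarith
      have hgR : g R₀ / c ^ n ≤ g R := by
        rw [div_le_iff₀ (pow_pos hc0 n)]
        calc g R₀ ≤ c ^ n * g (R₀ + n * r) := key n
          _ ≤ c ^ n * g R := mul_le_mul_of_nonneg_left (hgm hle) (pow_nonneg hc0.le n)
          _ = g R * c ^ n := by ring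
      have hlog : Real.log (g R₀) - n * Real.log c ≤ Real.log (g R) := by
        have hpos : 0 < g R₀ / c ^ n := div_pos (hg0 R₀) (pow_pos hc0 n)
        have := Real.log_le_log hpos hgR
        rwa [Real.log_div (hg0 R₀).ne' (pow_pos hc0 n).ne', Real.log_pow] at this
      have hlog2 : Real.log (g R₀) + ((R - R₀) / r - 1) * A ≤ Real.log (g R) := by
        have hnA : ((R - R₀) / r - 1) * A ≤ (n:ℝ) * A :=
          mul_le_mul_of_nonneg_right (by linarith) hA.le
        have : (n:ℝ) * A = -((n:ℝ) * Real.log c) := by rw [hAdef]; ring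
        nlinarith
      have heq : A / r + C / R = (Real.log (g R₀) + ((R - R₀) / r - 1) * A) / R := by
        rw [hCdef]
        field_simp
        ring
      rw [heq]
      exact (div_le_div_iff_of_pos_right hRpos).mpr hlog2
    have hC : Tendsto (fun R : ℝ => A / r + C / R) atTop (nhds (A / r + 0)) :=
      tendsto_const_nhds.add (tendsto_const_nhds.div_atTop tendsto_id)
    rw [add_zero] at hC
    have hhalf : A / (2 * r) < A / r := by
      rw [div_lt_div_iff₀ (by positivity) hr]
      nlinarith
    have hev2 : ∀ᶠ R in atTop, A / (2 * r) ≤ Real.log (g R) / R := by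
      filter_upwards [hC.eventually (eventually_gt_nhds hhalf),
        eventually_ge_atTop (max R₀ 1)] with R h₁ h₂
      exact le_trans h₁.le (hbound R h₂)
    have hlim : ((A / (2 * r) : ℝ) : EReal) ≤
        limsup (fun R => ((Real.log (g R) / R : ℝ) : EReal)) atTop := by
      exact le_limsup_of_frequently_le
        ((hev2.mono fun R h => by exact_mod_cast h).frequently) (by isBoundedDefault)
    rw [hsub] at hlim
    have h1 : A / (2 * r) ≤ 0 := by exact_mod_cast hlim
    have h2 : 0 < A / (2 * r) := by positivity
    linarith
end

section
/- In a one-dimensional geometric group formation game, if group G encroaches on group G' but G' does not encroach on G (i.e., some member of G lies in the convex hull (interval) of G''s locations, but no member of G' lies in the interval of G's locations), and both groups are nonempty, then G is nested in G': all members of G are located within the interval spanned by G''s locations. -/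
lemma hull_eq_Icc {n : ℕ} (x : Fin n → ℝ) (G : Finset (Fin n)) (h : G.Nonempty) :
    convexHull ℝ (x '' ↑G) = Set.Icc (G.inf' h x) (G.sup' h x) := by
  apply le_antisymm
  · apply convexHull_min _ (convex_Icc _ _)
    rintro _ ⟨i, hi, rfl⟩
    exact ⟨Finset.inf'_le _ hi, Finset.le_sup' _ hi⟩
  · obtain ⟨a, ha, hae⟩ := Finset.exists_mem_eq_inf' h x
    obtain ⟨b, hb, hbe⟩ := Finset.exists_mem_eq_sup' h x
    rw [← segment_eq_Icc ((Finset.inf'_le x ha).trans (Finset.le_sup' x ha))]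
    exact segment_subset_convexHull (hae ▸ ⟨a, ha, rfl⟩) (hbe ▸ ⟨b, hb, rfl⟩)

/-- One-dimensional geometric group formation game: the territory of a group is the
convex hull (the closed interval spanned) of its members' locations in `ℝ`. If the
nonempty group `G` encroaches on the nonempty group `G'` (some member of `G` lies in
`G'`'s territory) but `G'` does not encroach on `G`, then `G` is nested in `G'`:
every member of `G` lies in `G'`'s territory. -/
theorem stmt15 {n : ℕ} (x : Fin n → ℝ) (G G' : Finset (Fin n))
    (hG : G.Nonempty) (hG' : G'.Nonempty)
    (henc : ∃ i ∈ G, x i ∈ convexHull ℝ (x '' ↑G'))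
    (hnotenc : ¬ ∃ j ∈ G', x j ∈ convexHull ℝ (x '' ↑G)) :
    ∀ i ∈ G, x i ∈ convexHull ℝ (x '' ↑G') := by
  rw [hull_eq_Icc x G' hG'] at *
  rw [hull_eq_Icc x G hG] at hnotenc
  push_neg at hnotenc
  obtain ⟨i₀, hi₀, hlo, hhi⟩ := henc
  obtain ⟨a, haG, hae⟩ := Finset.exists_mem_eq_inf' hG' x
  obtain ⟨b, hbG, hbe⟩ := Finset.exists_mem_eq_sup' hG' x
  have hna := hnotenc a haG
  have hnb := hnotenc b hbG
  simp only [Set.mem_Icc, not_and, not_le] at hna hnb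
  intro i hi
  have h1 : G.inf' hG x ≤ x i₀ := Finset.inf'_le _ hi₀
  have h2 : x i₀ ≤ G.sup' hG x := Finset.le_sup' _ hi₀
  constructor
  · have : ¬ G.inf' hG x ≤ x a := fun hc => absurd (hna hc) (by rw [← hae]; linarith)
    push_neg at this
    rw [hae]
    linarith [Finset.inf'_le x hi]
  · have : G.sup' hG x < x b := hnb (by rw [← hbe]; linarith)
    rw [hbe]
    linarith [Finset.le_sup' x hi]
end

section
/- For the three-agent instance on the line (x = (0, 0.6, 1.2), r = (2, 1, 2), U_G = R_G/(1 + diam)), none of the three partitions of {1,2,3} into exactly two nonempty groups is an Acceptance Equilibrium. -/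
/-- Locations of the three agents on the line. -/
noncomputable def xloc : Fin 3 → ℝ := ![0, 0.6, 1.2]

/-- Resources of the three agents. -/
noncomputable def res : Fin 3 → ℝ := ![2, 1, 2]

/-- Group utility `U G = (∑_{i∈G} r_i) / (1 + max_{i,j∈G} |x_i − x_j|)`. -/
noncomputable def util (G : Finset (Fin 3)) : ℝ :=
  (∑ i ∈ G, res i) / (1 + Metric.diam (xloc '' ↑G))

/-- `P` is an Acceptance Equilibrium: a partition such that for every agent `i` in
a group `G ∈ P` and every other group `G'` (including the empty group, with
`U ∅ = -∞`, which yields the condition `U G ≥ U {i}`), either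
`U G ≥ U (G' ∪ {i})` or `U G' > U (G' ∪ {i})`. -/
def IsAE (P : Finset (Finset (Fin 3))) : Prop :=
  ((∀ G ∈ P, G.Nonempty) ∧ ∀ i : Fin 3, ∃! G, G ∈ P ∧ i ∈ G) ∧
  ∀ G ∈ P, ∀ i ∈ G,
    util G ≥ util {i} ∧
    ∀ G' ∈ P, G' ≠ G → (util G ≥ util (insert i G') ∨ util G' > util (insert i G'))

lemma util_single (i : Fin 3) : util {i} = res i := by
  simp [util]

lemma util_pair (i j : Fin 3) (h : i ≠ j) :
    util {i, j} = (res i + res j) / (1 + dist (xloc i) (xloc j)) := by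
  simp [util, Finset.sum_pair h, Set.image_insert_eq, Metric.diam_pair]

/-- For the three-agent instance with locations `0, 0.6, 1.2` and resources
`2, 1, 2`, none of the three partitions of `{1,2,3}` into exactly two nonempty
groups is an Acceptance Equilibrium. -/
theorem stmt17 :
    ¬ IsAE {({0, 1} : Finset (Fin 3)), {2}} ∧
    ¬ IsAE {({0, 2} : Finset (Fin 3)), {1}} ∧
    ¬ IsAE {({1, 2} : Finset (Fin 3)), {0}} := by
  refine ⟨fun h => ?_, fun h => ?_, fun h => ?_⟩
  · have := (h.2 {0, 1} (by simp) 0 (by simp)).1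
    rw [util_single, util_pair 0 1 (by decide)] at this
    rw [show dist (xloc 0) (xloc 1) = 0.6 by
      simp [xloc, Real.dist_eq]; norm_num] at this
    simp [res] at this
    norm_num at this
  · have := (h.2 {0, 2} (by simp) 0 (by simp)).1
    rw [util_single, util_pair 0 2 (by decide)] at this
    rw [show dist (xloc 0) (xloc 2) = 1.2 by
      simp [xloc, Real.dist_eq]; norm_num] at this
    simp [res] at this
    norm_num at this
  · have := (h.2 {1, 2} (by simp) 2 (by simp)).1
    rw [util_single, util_pair 1 2 (by decide)] at this
    rw [show dist (xloc 1) (xloc 2) = 0.6 by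
      simp [xloc, Real.dist_eq]; norm_num] at this
    simp [res] at this
    norm_num at this
end

section
/- Suppose groups G_1, ..., G_m all have the same coverage D_G, sizes n_1 > n_2 > ... > n_m, and per-member resources r_1 ≥ r_2 ≥ ... ≥ r_m > 0 (each member of G_k has resource r_k), and f : ℝ×ℝ → ℝ is increasing in its first argument and decreasing in its second. If for all k < m, f(r_k n_k + r_{k+1}, D_G + δ) < f(r_k n_k, D_G), then for all k < k' ≤ m: f(r_{k'} n_{k'} + r_k, D_G + δ) < f(r_k n_k, D_G). -/
/-- Groups `G_1, …, G_m` (0-indexed here as `k < m`) all have the same coverage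
`Dg`, strictly decreasing sizes `n 0 > n 1 > ⋯ > n (m-1)`, and non-increasing
positive per-member resources `r 0 ≥ r 1 ≥ ⋯ ≥ r (m-1) > 0`; `f` is increasing in
its first argument and decreasing in its second. If the single-step conditions
`f (r k * n k + r (k+1)) (Dg + δ) < f (r k * n k) Dg` hold for all `k` with
`k + 1 < m`, then for all `k < k' < m`:
`f (r k' * n k' + r k) (Dg + δ) < f (r k * n k) Dg`. -/
theorem stmt18 (m : ℕ) (n : ℕ → ℕ) (r : ℕ → ℝ) (f : ℝ → ℝ → ℝ)
    (Dg δ : ℝ) (hDg : 0 < Dg) (hδ : 0 < δ)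
    (hn : ∀ k k', k < k' → k' < m → n k' < n k)
    (hrpos : ∀ k < m, 0 < r k)
    (hrmono : ∀ k k', k ≤ k' → k' < m → r k' ≤ r k)
    (hf1 : ∀ c : ℝ, Monotone fun R => f R c)
    (hf2 : ∀ R : ℝ, Antitone (f R))
    (hstep : ∀ k, k + 1 < m →
      f (r k * n k + r (k + 1)) (Dg + δ) < f (r k * n k) Dg) :
    ∀ k k', k < k' → k' < m →
      f (r k' * n k' + r k) (Dg + δ) < f (r k * n k) Dg := by
  intro k k' hk hk'
  have hk1 : k + 1 ≤ k' := hk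
  have hkm : k + 1 < m := by omega
  have hrk : 0 < r k := hrpos k (by omega)
  have hrk1 : 0 < r (k + 1) := hrpos (k + 1) (by omega)
  have hnk : n k' < n k := hn k k' hk hk'
  have hrk' : r k' ≤ r k := hrmono k k' (le_of_lt hk) hk'
  have h1 : r k' * n k' + r k ≤ r k * n k := by
    have hn1 : (n k' : ℝ) ≤ (n k : ℝ) - 1 := by
      have : (n k' : ℝ) + 1 ≤ n k := by exact_mod_cast hnk
      linarith
    have hnn : (0:ℝ) ≤ n k' := Nat.cast_nonneg _
    have : r k' * n k' ≤ r k * n k' :=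
      mul_le_mul_of_nonneg_right hrk' hnn
    have h2 : r k * n k' ≤ r k * ((n k : ℝ) - 1) :=
      mul_le_mul_of_nonneg_left hn1 (le_of_lt hrk)
    nlinarith
  have h3 : r k' * n k' + r k ≤ r k * n k + r (k + 1) := by linarith
  calc f (r k' * n k' + r k) (Dg + δ) ≤ f (r k * n k + r (k + 1)) (Dg + δ) :=
        hf1 _ h3
    _ < f (r k * n k) Dg := hstep k (by omega)
end
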